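/- Let p, q ≥ 1, m = p + q, let γ_{k1} > 0 for 1 ≤ k ≤ m, let c > 0, and let γ_{k2} > 0 for 1 ≤ k ≤ p and γ_{k2} < 0 for p+1 ≤ k ≤ m. Then the intersection of two Hermitian quadrics Z = {z ∈ ℂ^m : Σ_{k=1}^m γ_{k1}|z_k|² = c and Σ_{k=1}^m γ_{k2}|z_k|² = 0} is homeomorphic to the product of spheres S^{2p−1} × S^{2q−1}. -/

import Mathlib

namespace Stmt9Aux
noncomputable section
open Complex Finset

def Q {n : ℕ} (a : Fin n → ℝ) (x : Fin n → ℂ) : ℝ := ∑ i, a i * Complex.normSq (x i)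

lemma Q_nonneg {n} {a : Fin n → ℝ} (ha : ∀ i, 0 < a i) (x : Fin n → ℂ) : 0 ≤ Q a x :=
  Finset.sum_nonneg fun i _ => mul_nonneg (ha i).le (Complex.normSq_nonneg _)

lemma Q_pos {n} {a : Fin n → ℝ} (ha : ∀ i, 0 < a i) {x : Fin n → ℂ} (hx : x ≠ 0) :
    0 < Q a x := by
  rcases (Q_nonneg ha x).lt_or_eq with h | h
  · exact h
  exfalso; apply hx
  have h0 := (Finset.sum_eq_zero_iff_of_nonneg (fun i (_ : i ∈ Finset.univ) =>
      mul_nonneg (ha i).le (Complex.normSq_nonneg (x i)))).mp h.symm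
  funext i
  have h2 : Complex.normSq (x i) = 0 := by
    rcases mul_eq_zero.mp (h0 i (Finset.mem_univ i)) with h' | h'
    · exact absurd h' (ha i).ne'
    · exact h'
  simpa using Complex.normSq_eq_zero.mp h2

lemma Q_eq_zero {n} {a : Fin n → ℝ} (ha : ∀ i, 0 < a i) {x : Fin n → ℂ} (hx : Q a x = 0) :
    x = 0 := by
  by_contra h
  exact (Q_pos ha h).ne' hx

lemma Q_zero {n} (a : Fin n → ℝ) : Q a 0 = 0 := by simp [Q]

lemma Q_smul {n} (a : Fin n → ℝ) (r : ℝ) (x : Fin n → ℂ) :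
    Q a (fun i => (r : ℂ) * x i) = r ^ 2 * Q a x := by
  simp only [Q, Complex.normSq_mul, Complex.normSq_ofReal, Finset.mul_sum]
  exact Finset.sum_congr rfl fun i _ => by ring

lemma Q_real_smul {n} (a : Fin n → ℝ) (r : ℝ) (x : Fin n → ℂ) :
    Q a (fun i => r • x i) = r ^ 2 * Q a x := by
  simp only [Complex.real_smul]
  exact Q_smul a r x

lemma Q_continuous {n} (a : Fin n → ℝ) : Continuous fun x : Fin n → ℂ => Q a x :=
  continuous_finset_sum _ fun i _ =>
    continuous_const.mul (Complex.continuous_normSq.comp (continuous_apply i))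

lemma calcS {A1 A2 B1 B2 ru rv cc : ℝ} (h1 : A1 + B1 = cc) (h2 : A2 = B2)
    (hcc : 0 < cc) (hA2 : 0 < A2) (hru : 0 < ru) (hrv : 0 < rv) :
    Real.sqrt (cc * ((rv)⁻¹ ^ 2 * B2) /
      ((rv)⁻¹ ^ 2 * B1 * ((ru)⁻¹ ^ 2 * A2) + (ru)⁻¹ ^ 2 * A1 * ((rv)⁻¹ ^ 2 * B2))) = ru := by
  subst h1; subst h2
  have key : (A1 + B1) * ((rv)⁻¹ ^ 2 * A2) /
      ((rv)⁻¹ ^ 2 * B1 * ((ru)⁻¹ ^ 2 * A2) + (ru)⁻¹ ^ 2 * A1 * ((rv)⁻¹ ^ 2 * A2))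
      = ru ^ 2 := by
    rw [show (rv)⁻¹ ^ 2 * B1 * ((ru)⁻¹ ^ 2 * A2) + (ru)⁻¹ ^ 2 * A1 * ((rv)⁻¹ ^ 2 * A2)
        = (ru)⁻¹ ^ 2 * ((rv)⁻¹ ^ 2 * (A2 * (A1 + B1))) from by ring]
    field_simp
  rw [key, Real.sqrt_sq hru.le]

lemma calcT {A1 A2 B1 B2 ru rv cc : ℝ} (h1 : A1 + B1 = cc) (h2 : A2 = B2)
    (hcc : 0 < cc) (hA2 : 0 < A2) (hru : 0 < ru) (hrv : 0 < rv) :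
    Real.sqrt (cc * ((ru)⁻¹ ^ 2 * A2) /
      ((rv)⁻¹ ^ 2 * B1 * ((ru)⁻¹ ^ 2 * A2) + (ru)⁻¹ ^ 2 * A1 * ((rv)⁻¹ ^ 2 * B2))) = rv := by
  subst h1; subst h2
  have key : (A1 + B1) * ((ru)⁻¹ ^ 2 * A2) /
      ((rv)⁻¹ ^ 2 * B1 * ((ru)⁻¹ ^ 2 * A2) + (ru)⁻¹ ^ 2 * A1 * ((rv)⁻¹ ^ 2 * A2))
      = rv ^ 2 := by
    rw [show (rv)⁻¹ ^ 2 * B1 * ((ru)⁻¹ ^ 2 * A2) + (ru)⁻¹ ^ 2 * A1 * ((rv)⁻¹ ^ 2 * A2)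
        = (ru)⁻¹ ^ 2 * ((rv)⁻¹ ^ 2 * (A2 * (A1 + B1))) from by ring]
    field_simp
  rw [key, Real.sqrt_sq hrv.le]

lemma mem_unit {E : Type*} [NormedAddCommGroup E] [NormedSpace ℝ E] {x : E} (hx : x ≠ 0) :
    ‖x‖⁻¹ • x ∈ Metric.sphere (0 : E) 1 := by
  rw [mem_sphere_zero_iff_norm, norm_smul, norm_inv, norm_norm,
    inv_mul_cancel₀ (norm_ne_zero_iff.mpr hx)]

section Main

variable (p q : ℕ) (γ1 γ2 : Fin (p + q) → ℝ) (c : ℝ)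

def a1 : Fin p → ℝ := fun i => γ1 (Fin.castAdd q i)
def a2 : Fin p → ℝ := fun i => γ2 (Fin.castAdd q i)
def b1 : Fin q → ℝ := fun j => γ1 (Fin.natAdd p j)
def b2 : Fin q → ℝ := fun j => -γ2 (Fin.natAdd p j)

def Zset : Set (Fin (p + q) → ℂ) :=
  {z | (∑ k, γ1 k * Complex.normSq (z k)) = c ∧
       (∑ k, γ2 k * Complex.normSq (z k)) = 0}

def uf (z : Fin (p + q) → ℂ) : Fin p → ℂ := fun i => z (Fin.castAdd q i)
def vf (z : Fin (p + q) → ℂ) : Fin q → ℂ := fun j => z (Fin.natAdd p j)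

def uE (z : Fin (p + q) → ℂ) : EuclideanSpace ℂ (Fin p) :=
  (WithLp.equiv 2 (Fin p → ℂ)).symm (uf p q z)
def vE (z : Fin (p + q) → ℂ) : EuclideanSpace ℂ (Fin q) :=
  (WithLp.equiv 2 (Fin q → ℂ)).symm (vf p q z)

lemma mem_Zset_iff (z : Fin (p + q) → ℂ) :
    z ∈ Zset p q γ1 γ2 c ↔
      Q (a1 p q γ1) (uf p q z) + Q (b1 p q γ1) (vf p q z) = c ∧
      Q (a2 p q γ2) (uf p q z) = Q (b2 p q γ2) (vf p q z) := by
  simp only [Zset, Set.mem_setOf_eq, Q, a1, a2, b1, b2, uf, vf, Fin.sum_univ_add, neg_mul,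
    Finset.sum_neg_distrib]
  constructor
  · rintro ⟨h1, h2⟩; exact ⟨h1, by linarith⟩
  · rintro ⟨h1, h2⟩; exact ⟨h1, by linarith⟩

def D (x : Fin p → ℂ) (y : Fin q → ℂ) : ℝ :=
  Q (b1 p q γ1) y * Q (a2 p q γ2) x + Q (a1 p q γ1) x * Q (b2 p q γ2) y

def sVal (x : Fin p → ℂ) (y : Fin q → ℂ) : ℝ :=
  Real.sqrt (c * Q (b2 p q γ2) y / D p q γ1 γ2 x y)

def tVal (x : Fin p → ℂ) (y : Fin q → ℂ) : ℝ :=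
  Real.sqrt (c * Q (a2 p q γ2) x / D p q γ1 γ2 x y)

def Gfun (x : Fin p → ℂ) (y : Fin q → ℂ) : Fin (p + q) → ℂ :=
  Fin.append (fun i => (sVal p q γ1 γ2 c x y : ℂ) * x i)
             (fun j => (tVal p q γ1 γ2 c x y : ℂ) * y j)

variable {p q γ1 γ2 c}
variable (ha1 : ∀ i, 0 < a1 p q γ1 i) (ha2 : ∀ i, 0 < a2 p q γ2 i)
  (hb1 : ∀ j, 0 < b1 p q γ1 j) (hb2 : ∀ j, 0 < b2 p q γ2 j) (hc : 0 < c)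

include ha1 ha2 hb1 hb2 in

lemma D_pos {x : Fin p → ℂ} {y : Fin q → ℂ} (hx : x ≠ 0) (hy : y ≠ 0) :
    0 < D p q γ1 γ2 x y :=
  add_pos (mul_pos (Q_pos hb1 hy) (Q_pos ha2 hx)) (mul_pos (Q_pos ha1 hx) (Q_pos hb2 hy))

include ha1 ha2 hb1 hb2 hc in
lemma sVal_pos {x : Fin p → ℂ} {y : Fin q → ℂ} (hx : x ≠ 0) (hy : y ≠ 0) :
    0 < sVal p q γ1 γ2 c x y :=
  Real.sqrt_pos.mpr (div_pos (mul_pos hc (Q_pos hb2 hy)) (D_pos ha1 ha2 hb1 hb2 hx hy))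

include ha1 ha2 hb1 hb2 hc in
lemma tVal_pos {x : Fin p → ℂ} {y : Fin q → ℂ} (hx : x ≠ 0) (hy : y ≠ 0) :
    0 < tVal p q γ1 γ2 c x y :=
  Real.sqrt_pos.mpr (div_pos (mul_pos hc (Q_pos ha2 hx)) (D_pos ha1 ha2 hb1 hb2 hx hy))

include ha1 ha2 hb1 hb2 hc in
lemma sVal_sq {x : Fin p → ℂ} {y : Fin q → ℂ} (hx : x ≠ 0) (hy : y ≠ 0) :
    (sVal p q γ1 γ2 c x y) ^ 2 = c * Q (b2 p q γ2) y / D p q γ1 γ2 x y :=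
  Real.sq_sqrt (div_pos (mul_pos hc (Q_pos hb2 hy)) (D_pos ha1 ha2 hb1 hb2 hx hy)).le

include ha1 ha2 hb1 hb2 hc in
lemma tVal_sq {x : Fin p → ℂ} {y : Fin q → ℂ} (hx : x ≠ 0) (hy : y ≠ 0) :
    (tVal p q γ1 γ2 c x y) ^ 2 = c * Q (a2 p q γ2) x / D p q γ1 γ2 x y :=
  Real.sq_sqrt (div_pos (mul_pos hc (Q_pos ha2 hx)) (D_pos ha1 ha2 hb1 hb2 hx hy)).le

lemma uf_Gfun (x : Fin p → ℂ) (y : Fin q → ℂ) :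
    uf p q (Gfun p q γ1 γ2 c x y) = fun i => (sVal p q γ1 γ2 c x y : ℂ) * x i :=
  by
  funext i
  simp only [uf, Gfun]
  exact Fin.append_left _ _ i

lemma vf_Gfun (x : Fin p → ℂ) (y : Fin q → ℂ) :
    vf p q (Gfun p q γ1 γ2 c x y) = fun j => (tVal p q γ1 γ2 c x y : ℂ) * y j :=
  by
  funext j
  simp only [vf, Gfun]
  exact Fin.append_right _ _ j

include ha1 ha2 hb1 hb2 hc in
lemma Gfun_mem {x : Fin p → ℂ} {y : Fin q → ℂ} (hx : x ≠ 0) (hy : y ≠ 0) :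
    Gfun p q γ1 γ2 c x y ∈ Zset p q γ1 γ2 c := by
  have hD := D_pos ha1 ha2 hb1 hb2 hx hy (γ1 := γ1) (γ2 := γ2)
  rw [mem_Zset_iff, uf_Gfun, vf_Gfun, Q_smul, Q_smul, Q_smul, Q_smul,
    sVal_sq ha1 ha2 hb1 hb2 hc hx hy, tVal_sq ha1 ha2 hb1 hb2 hc hx hy]
  unfold D at *
  constructor
  · field_simp
    rw [div_eq_one_iff_eq (by linarith)]; ring
  · field_simp

include ha1 ha2 hb1 hb2 hc in
lemma blocks_ne {z : Fin (p + q) → ℂ} (hz : z ∈ Zset p q γ1 γ2 c) :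
    uf p q z ≠ 0 ∧ vf p q z ≠ 0 := by
  rw [mem_Zset_iff] at hz
  obtain ⟨h1, h2⟩ := hz
  constructor
  · intro h
    rw [h, Q_zero] at h1 h2
    have hv := Q_eq_zero hb2 h2.symm
    rw [hv, Q_zero] at h1
    exact hc.ne' (by linarith)
  · intro h
    rw [h, Q_zero] at h1 h2
    have hu := Q_eq_zero ha2 h2
    rw [hu, Q_zero] at h1
    exact hc.ne' (by linarith)

include ha1 ha2 hb1 hb2 hc in
lemma sVal_norm {z : Fin (p + q) → ℂ} (hz : z ∈ Zset p q γ1 γ2 c) :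
    sVal p q γ1 γ2 c (fun i => ‖uE p q z‖⁻¹ • uf p q z i)
      (fun j => ‖vE p q z‖⁻¹ • vf p q z j) = ‖uE p q z‖ := by
  obtain ⟨hu, hv⟩ := blocks_ne ha1 ha2 hb1 hb2 hc hz
  have huE : uE p q z ≠ 0 := fun h => hu (congrArg WithLp.ofLp h)
  have hvE : vE p q z ≠ 0 := fun h => hv (congrArg WithLp.ofLp h)
  have hru : 0 < ‖uE p q z‖ := norm_pos_iff.mpr huE
  have hrv : 0 < ‖vE p q z‖ := norm_pos_iff.mpr hvE
  obtain ⟨h1, h2⟩ := (mem_Zset_iff p q γ1 γ2 c z).mp hz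
  unfold sVal D
  rw [Q_real_smul, Q_real_smul, Q_real_smul, Q_real_smul]
  exact calcS h1 h2 hc (Q_pos ha2 hu) hru hrv

include ha1 ha2 hb1 hb2 hc in
lemma tVal_norm {z : Fin (p + q) → ℂ} (hz : z ∈ Zset p q γ1 γ2 c) :
    tVal p q γ1 γ2 c (fun i => ‖uE p q z‖⁻¹ • uf p q z i)
      (fun j => ‖vE p q z‖⁻¹ • vf p q z j) = ‖vE p q z‖ := by
  obtain ⟨hu, hv⟩ := blocks_ne ha1 ha2 hb1 hb2 hc hz
  have huE : uE p q z ≠ 0 := fun h => hu (congrArg WithLp.ofLp h)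
  have hvE : vE p q z ≠ 0 := fun h => hv (congrArg WithLp.ofLp h)
  have hru : 0 < ‖uE p q z‖ := norm_pos_iff.mpr huE
  have hrv : 0 < ‖vE p q z‖ := norm_pos_iff.mpr hvE
  obtain ⟨h1, h2⟩ := (mem_Zset_iff p q γ1 γ2 c z).mp hz
  unfold tVal D
  rw [Q_real_smul, Q_real_smul, Q_real_smul, Q_real_smul]
  exact calcT h1 h2 hc (Q_pos ha2 hu) hru hrv

end Main

section KeyThm

theorem key (p q : ℕ) (γ1 γ2 : Fin (p + q) → ℝ) (c : ℝ) (hc : 0 < c)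
    (hγ1 : ∀ k, 0 < γ1 k)
    (hγ2pos : ∀ k : Fin (p + q), (k : ℕ) < p → 0 < γ2 k)
    (hγ2neg : ∀ k : Fin (p + q), p ≤ (k : ℕ) → γ2 k < 0) :
    Nonempty ((Zset p q γ1 γ2 c) ≃ₜ
      (Metric.sphere (0 : EuclideanSpace ℂ (Fin p)) 1 ×
        Metric.sphere (0 : EuclideanSpace ℂ (Fin q)) 1)) := by
  have ha1 : ∀ i, 0 < a1 p q γ1 i := fun i => hγ1 _
  have ha2 : ∀ i, 0 < a2 p q γ2 i := fun i => hγ2pos _ (by simpa using i.isLt)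
  have hb1 : ∀ j, 0 < b1 p q γ1 j := fun j => hγ1 _
  have hb2 : ∀ j, 0 < b2 p q γ2 j := fun j => neg_pos.mpr (hγ2neg _ (by simp))
  have hufne : ∀ z : (Zset p q γ1 γ2 c), uf p q z.1 ≠ 0 :=
    fun z => (blocks_ne ha1 ha2 hb1 hb2 hc z.2).1
  have hvfne : ∀ z : (Zset p q γ1 γ2 c), vf p q z.1 ≠ 0 :=
    fun z => (blocks_ne ha1 ha2 hb1 hb2 hc z.2).2
  have huEne : ∀ z : (Zset p q γ1 γ2 c), uE p q z.1 ≠ 0 := fun z h => hufne z (congrArg WithLp.ofLp h)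
  have hvEne : ∀ z : (Zset p q γ1 γ2 c), vE p q z.1 ≠ 0 := fun z h => hvfne z (congrArg WithLp.ofLp h)
  have hxne : ∀ w : Metric.sphere (0 : EuclideanSpace ℂ (Fin p)) 1,
      (fun i => (w : EuclideanSpace ℂ (Fin p)) i) ≠ (0 : Fin p → ℂ) :=
    fun w h => ne_zero_of_mem_unit_sphere w (by ext i; simpa using congrFun h i)
  have hyne : ∀ w : Metric.sphere (0 : EuclideanSpace ℂ (Fin q)) 1,
      (fun j => (w : EuclideanSpace ℂ (Fin q)) j) ≠ (0 : Fin q → ℂ) :=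
    fun w h => ne_zero_of_mem_unit_sphere w (by ext j; simpa using congrFun h j)
  refine ⟨Homeomorph.mk (Equiv.mk
    (fun z => (⟨‖uE p q z.1‖⁻¹ • uE p q z.1, mem_unit (huEne z)⟩,
               ⟨‖vE p q z.1‖⁻¹ • vE p q z.1, mem_unit (hvEne z)⟩))
    (fun w => ⟨Gfun p q γ1 γ2 c (fun i => (w.1 : EuclideanSpace ℂ (Fin p)) i)
        (fun j => (w.2 : EuclideanSpace ℂ (Fin q)) j),
        Gfun_mem ha1 ha2 hb1 hb2 hc (hxne w.1) (hyne w.2)⟩)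
    ?_ ?_) ?_ ?_⟩
  · -- left inverse
    intro z
    apply Subtype.ext
    show Gfun p q γ1 γ2 c (fun i => ‖uE p q z.1‖⁻¹ • uf p q z.1 i)
      (fun j => ‖vE p q z.1‖⁻¹ • vf p q z.1 j) = z.1
    funext k
    induction k using Fin.addCases with
    | left i =>
      simp only [Gfun]
      rw [Fin.append_left, sVal_norm ha1 ha2 hb1 hb2 hc z.2]
      have hru : (‖uE p q z.1‖ : ℝ) ≠ 0 := norm_ne_zero_iff.mpr (huEne z)
      rw [Complex.real_smul, ← mul_assoc, ← Complex.ofReal_mul, mul_inv_cancel₀ hru,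
        Complex.ofReal_one, one_mul]
      rfl
    | right j =>
      simp only [Gfun]
      rw [Fin.append_right, tVal_norm ha1 ha2 hb1 hb2 hc z.2]
      have hrv : (‖vE p q z.1‖ : ℝ) ≠ 0 := norm_ne_zero_iff.mpr (hvEne z)
      rw [Complex.real_smul, ← mul_assoc, ← Complex.ofReal_mul, mul_inv_cancel₀ hrv,
        Complex.ofReal_one, one_mul]
      rfl
  · -- right inverse
    intro w
    have hs : 0 < sVal p q γ1 γ2 c (fun i => (w.1 : EuclideanSpace ℂ (Fin p)) i)
        (fun j => (w.2 : EuclideanSpace ℂ (Fin q)) j) :=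
      sVal_pos ha1 ha2 hb1 hb2 hc (hxne w.1) (hyne w.2)
    have ht : 0 < tVal p q γ1 γ2 c (fun i => (w.1 : EuclideanSpace ℂ (Fin p)) i)
        (fun j => (w.2 : EuclideanSpace ℂ (Fin q)) j) :=
      tVal_pos ha1 ha2 hb1 hb2 hc (hxne w.1) (hyne w.2)
    have hu : uE p q (Gfun p q γ1 γ2 c (fun i => (w.1 : EuclideanSpace ℂ (Fin p)) i)
        (fun j => (w.2 : EuclideanSpace ℂ (Fin q)) j))
        = sVal p q γ1 γ2 c (fun i => (w.1 : EuclideanSpace ℂ (Fin p)) i)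
            (fun j => (w.2 : EuclideanSpace ℂ (Fin q)) j) • (w.1 : EuclideanSpace ℂ (Fin p)) := by
      ext i
      exact (congrFun (uf_Gfun _ _) i).trans Complex.real_smul.symm
    have hv : vE p q (Gfun p q γ1 γ2 c (fun i => (w.1 : EuclideanSpace ℂ (Fin p)) i)
        (fun j => (w.2 : EuclideanSpace ℂ (Fin q)) j))
        = tVal p q γ1 γ2 c (fun i => (w.1 : EuclideanSpace ℂ (Fin p)) i)
            (fun j => (w.2 : EuclideanSpace ℂ (Fin q)) j) • (w.2 : EuclideanSpace ℂ (Fin q)) := by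
      ext j
      exact (congrFun (vf_Gfun _ _) j).trans Complex.real_smul.symm
    refine Prod.ext ?_ ?_
    · apply Subtype.ext
      show ‖uE p q _‖⁻¹ • uE p q _ = (w.1 : EuclideanSpace ℂ (Fin p))
      rw [hu, norm_smul, mem_sphere_zero_iff_norm.mp w.1.2, mul_one, Real.norm_eq_abs,
        abs_of_pos hs, smul_smul, inv_mul_cancel₀ hs.ne', one_smul]
    · apply Subtype.ext
      show ‖vE p q _‖⁻¹ • vE p q _ = (w.2 : EuclideanSpace ℂ (Fin q))
      rw [hv, norm_smul, mem_sphere_zero_iff_norm.mp w.2.2, mul_one, Real.norm_eq_abs,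
        abs_of_pos ht, smul_smul, inv_mul_cancel₀ ht.ne', one_smul]
  · -- continuity of toFun
    have cu : Continuous fun z : (Zset p q γ1 γ2 c) => uE p q z.1 := by
      simp only [uE, uf]
      exact (PiLp.continuous_toLp 2 fun _ : Fin p => ℂ).comp
        (continuous_pi fun i => (continuous_apply (Fin.castAdd q i)).comp continuous_subtype_val)
    have cv : Continuous fun z : (Zset p q γ1 γ2 c) => vE p q z.1 := by
      simp only [vE, vf]
      exact (PiLp.continuous_toLp 2 fun _ : Fin q => ℂ).comp
        (continuous_pi fun j => (continuous_apply (Fin.natAdd p j)).comp continuous_subtype_val)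
    refine Continuous.prodMk ?_ ?_
    · exact Continuous.subtype_mk
        ((cu.norm.inv₀ fun z => norm_ne_zero_iff.mpr (huEne z)).smul cu) _
    · exact Continuous.subtype_mk
        ((cv.norm.inv₀ fun z => norm_ne_zero_iff.mpr (hvEne z)).smul cv) _
  · -- continuity of invFun
    have cX : Continuous fun w : (Metric.sphere (0 : EuclideanSpace ℂ (Fin p)) 1 ×
        Metric.sphere (0 : EuclideanSpace ℂ (Fin q)) 1) =>
          (fun i => (w.1 : EuclideanSpace ℂ (Fin p)) i) :=
      continuous_pi fun i => (continuous_apply i).comp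
        ((PiLp.continuous_ofLp 2 fun _ : Fin p => ℂ).comp
          (continuous_subtype_val.comp continuous_fst))
    have cY : Continuous fun w : (Metric.sphere (0 : EuclideanSpace ℂ (Fin p)) 1 ×
        Metric.sphere (0 : EuclideanSpace ℂ (Fin q)) 1) =>
          (fun j => (w.2 : EuclideanSpace ℂ (Fin q)) j) :=
      continuous_pi fun j => (continuous_apply j).comp
        ((PiLp.continuous_ofLp 2 fun _ : Fin q => ℂ).comp
          (continuous_subtype_val.comp continuous_snd))
    have cD : Continuous fun w : (Metric.sphere (0 : EuclideanSpace ℂ (Fin p)) 1 ×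
        Metric.sphere (0 : EuclideanSpace ℂ (Fin q)) 1) =>
          D p q γ1 γ2 (fun i => (w.1 : EuclideanSpace ℂ (Fin p)) i)
            (fun j => (w.2 : EuclideanSpace ℂ (Fin q)) j) := by
      simp only [D]
      exact (((Q_continuous (b1 p q γ1)).comp cY).mul ((Q_continuous (a2 p q γ2)).comp cX)).add
        (((Q_continuous (a1 p q γ1)).comp cX).mul ((Q_continuous (b2 p q γ2)).comp cY))
    have hDne : ∀ w : (Metric.sphere (0 : EuclideanSpace ℂ (Fin p)) 1 ×
        Metric.sphere (0 : EuclideanSpace ℂ (Fin q)) 1),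
          D p q γ1 γ2 (fun i => (w.1 : EuclideanSpace ℂ (Fin p)) i)
            (fun j => (w.2 : EuclideanSpace ℂ (Fin q)) j) ≠ 0 :=
      fun w => (D_pos ha1 ha2 hb1 hb2 (hxne w.1) (hyne w.2)).ne'
    have cs : Continuous fun w : (Metric.sphere (0 : EuclideanSpace ℂ (Fin p)) 1 ×
        Metric.sphere (0 : EuclideanSpace ℂ (Fin q)) 1) =>
          sVal p q γ1 γ2 c (fun i => (w.1 : EuclideanSpace ℂ (Fin p)) i)
            (fun j => (w.2 : EuclideanSpace ℂ (Fin q)) j) := by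
      simp only [sVal]
      exact Real.continuous_sqrt.comp
        ((continuous_const.mul ((Q_continuous (b2 p q γ2)).comp cY)).div cD hDne)
    have ct : Continuous fun w : (Metric.sphere (0 : EuclideanSpace ℂ (Fin p)) 1 ×
        Metric.sphere (0 : EuclideanSpace ℂ (Fin q)) 1) =>
          tVal p q γ1 γ2 c (fun i => (w.1 : EuclideanSpace ℂ (Fin p)) i)
            (fun j => (w.2 : EuclideanSpace ℂ (Fin q)) j) := by
      simp only [tVal]
      exact Real.continuous_sqrt.comp
        ((continuous_const.mul ((Q_continuous (a2 p q γ2)).comp cX)).div cD hDne)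
    refine Continuous.subtype_mk (continuous_pi fun k => ?_) _
    induction k using Fin.addCases with
    | left i =>
      simp only [Gfun, Fin.append_left]
      exact (Complex.continuous_ofReal.comp cs).mul ((continuous_apply i).comp cX)
    | right j =>
      simp only [Gfun, Fin.append_right]
      exact (Complex.continuous_ofReal.comp ct).mul ((continuous_apply j).comp cY)

end KeyThm
end
end Stmt9Aux

theorem stmt_9 (p q : ℕ) (hp : 1 ≤ p) (hq : 1 ≤ q)
    (γ1 γ2 : Fin (p + q) → ℝ) (c : ℝ) (hc : 0 < c)
    (hγ1 : ∀ k, 0 < γ1 k)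
    (hγ2pos : ∀ k : Fin (p + q), (k : ℕ) < p → 0 < γ2 k)
    (hγ2neg : ∀ k : Fin (p + q), p ≤ (k : ℕ) → γ2 k < 0) :
    Nonempty
      ({z : Fin (p + q) → ℂ |
          (∑ k, γ1 k * Complex.normSq (z k)) = c ∧
          (∑ k, γ2 k * Complex.normSq (z k)) = 0} ≃ₜ
        (Metric.sphere (0 : EuclideanSpace ℂ (Fin p)) 1 ×
          Metric.sphere (0 : EuclideanSpace ℂ (Fin q)) 1)) := by
  exact Stmt9Aux.key p q γ1 γ2 c hc hγ1 hγ2pos hγ2neg
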